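/- arXiv:2312.16725 — 7 statements merged into one kernel-verified Lean document; each statement's English description precedes it below -/
import Mathlib

section
/- Let (S, T) be a metrizable topological space. Then S is homeomorphic to a Borel subset of a Polish space if and only if there exists a topology T' on S with T ⊆ T' (i.e., T' is finer than T) such that (S, T') is a Polish space. -/
open TopologicalSpace Topology UniformSpace

/-- A metrizable topological space `(S, T)` is homeomorphic to a Borel subset
of a Polish space if and only if there exists a finer topology `T'` on `S` (i.e. `T ⊆ T'`,
which in Mathlib's order on topologies reads `T' ≤ T`) such that `(S, T')` is Polish. -/
theorem statement0 {S : Type u} [t : TopologicalSpace S] [TopologicalSpace.MetrizableSpace S] :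
    (∃ (S' : Type u) (ts : TopologicalSpace S') (A : Set S'),
        @PolishSpace S' ts ∧ @MeasurableSet S' (@borel S' ts) A ∧
          Nonempty (@Homeomorph S A t (@instTopologicalSpaceSubtype S' (· ∈ A) ts))) ↔
      ∃ t' : TopologicalSpace S, t' ≤ t ∧ @PolishSpace S t' := by
  constructor
  · rintro ⟨S', ts, A, hp, hA, ⟨e⟩⟩
    -- Extract the underlying equiv together with the fact that `t` is the topology induced
    -- from the subtype topology, before any competing topology enters the context.
    obtain ⟨g, hg⟩ : ∃ g : S ≃ A, t = (ts.induced ((↑) : A → S')).induced g :=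
      ⟨e.toEquiv, e.isInducing.eq_induced⟩
    -- A Borel set in a Polish space is clopenable: there is a finer Polish topology `t2`
    -- on `S'` in which `A` is closed.
    obtain ⟨t2, t2le, t2polish, A_closed, -⟩ :
        ∃ t2 : TopologicalSpace S', t2 ≤ ts ∧ @PolishSpace S' t2 ∧
          IsClosed[t2] A ∧ IsOpen[t2] A := by
      letI : MeasurableSpace S' := borel S'
      haveI : BorelSpace S' := ⟨rfl⟩
      exact hA.isClopenable
    -- `A` with the topology induced by `t2` is Polish (closed subset of a Polish space).
    haveI hPA : @PolishSpace A (t2.induced ((↑) : A → S')) := by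
      letI := t2; haveI := t2polish; exact A_closed.polishSpace
    -- Pull this Polish topology back to `S` along `g`.
    refine ⟨(t2.induced ((↑) : A → S')).induced g, ?_,
      @Equiv.polishSpace_induced S A (t2.induced ((↑) : A → S')) hPA g⟩
    exact le_of_le_of_eq (induced_mono (induced_mono t2le)) hg.symm
  · intro h
    -- Fix a metric generating `t` before introducing the finer topology.
    obtain ⟨m, rfl⟩ : ∃ m : MetricSpace S, m.toUniformSpace.toTopologicalSpace = t :=
      ⟨TopologicalSpace.metrizableSpaceMetric S, rfl⟩
    letI : MetricSpace S := m
    obtain ⟨t', t'le, t'polish⟩ := h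
    -- `(S, t)` is separable since the finer Polish topology `t'` is.
    haveI : @SecondCountableTopology S t' := t'polish.toSecondCountableTopology
    haveI sep' : @SeparableSpace S t' := by letI := t'; infer_instance
    haveI : @SeparableSpace S m.toUniformSpace.toTopologicalSpace :=
      @DenseRange.separableSpace S S t' sep' m.toUniformSpace.toTopologicalSpace id
        (@denseRange_id S m.toUniformSpace.toTopologicalSpace)
        (continuous_le_dom t'le (@continuous_id S m.toUniformSpace.toTopologicalSpace))
    -- The coercion into the completion is continuous also for the finer topology `t'`.
    have hc : @Continuous S (Completion S) t' _ ((↑) : S → Completion S) :=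
      continuous_le_dom t'le (Completion.continuous_coe S)
    -- The completion is Polish, and the range of `S` in it is Borel by Lusin–Souslin,
    -- since it is the range of an injective map which is continuous for `t'`.
    refine ⟨Completion S, inferInstance, Set.range ((↑) : S → Completion S),
      inferInstance, ?_, ?_⟩
    · letI : MeasurableSpace (Completion S) := borel (Completion S)
      haveI : BorelSpace (Completion S) := ⟨rfl⟩
      exact @MeasureTheory.measurableSet_range_of_continuous_injective S (Completion S)
        t' t'polish _ _ _ _ _ hc (Completion.coe_injective S)
    · exact ⟨@Topology.IsEmbedding.toHomeomorph S (Completion S) m.toUniformSpace.toTopologicalSpace _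
        ((↑) : S → Completion S) (Completion.isUniformEmbedding_coe S).isEmbedding⟩
end

section
/- Let S be a separable metric space. Then there exists a countable family F of continuous functions from S to [0,1] that is closed under pointwise multiplication and is convergence determining: for every sequence (x_n) in S and every x ∈ S, one has x_n → x if and only if f(x_n) → f(x) for every f ∈ F. -/
open Filter

/-- Every separable metric space `S` admits a countable family `F` of continuous
`[0,1]`-valued functions that is closed under pointwise multiplication and convergence
determining: a sequence `x_n` converges to `x` iff `f (x_n) → f x` for all `f ∈ F`. -/
theorem statement2 {S : Type*} [MetricSpace S] [TopologicalSpace.SeparableSpace S] :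
    ∃ F : Set (S → ℝ),
      F.Countable ∧
      (∀ f ∈ F, Continuous f ∧ ∀ x, f x ∈ Set.Icc (0 : ℝ) 1) ∧
      (∀ f ∈ F, ∀ g ∈ F, (f * g) ∈ F) ∧
      (∀ (x : ℕ → S) (x₀ : S),
        Tendsto x atTop (nhds x₀) ↔
          ∀ f ∈ F, Tendsto (fun n => f (x n)) atTop (nhds (f x₀))) := by
  obtain ⟨D, Dcount, Ddense⟩ := TopologicalSpace.exists_countable_dense S
  haveI := Dcount.to_subtype
  set g : S → ℕ → S → ℝ := fun d k x => max 0 (1 - ((k : ℝ)+1) * dist x d) with hg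
  have gcont : ∀ d k, Continuous (g d k) := by
    intro d k
    exact continuous_const.max
      (continuous_const.sub (continuous_const.mul ((continuous_id.dist continuous_const))))
  have gmem : ∀ d k x, g d k x ∈ Set.Icc (0:ℝ) 1 := by
    intro d k x
    constructor
    · exact le_max_left _ _
    · apply max_le (by norm_num)
      have : 0 ≤ ((k:ℝ)+1) * dist x d :=
        mul_nonneg (by positivity) dist_nonneg
      linarith
  set F : Set (S → ℝ) :=
    Set.range (fun l : List (↥D × ℕ) => (l.map fun p => g p.1 p.2).prod) with hF
  have hme : ∀ (l : List (↥D × ℕ)) x,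
      (l.map fun p => g p.1 p.2).prod x = (l.map fun p => g p.1 p.2 x).prod := by
    intro l x
    induction l with
    | nil => simp
    | cons p l ih => simp [ih]
  have hcont : ∀ f ∈ F, Continuous f ∧ ∀ x, f x ∈ Set.Icc (0:ℝ) 1 := by
    rintro f ⟨l, rfl⟩
    induction l with
    | nil => exact ⟨by simpa using continuous_one, fun x => by norm_num⟩
    | cons p l ih =>
      constructor
      · simpa using (gcont p.1 p.2).mul ih.1
      · intro x
        have h1 := gmem p.1 p.2 x
        have h2 := ih.2 x
        simp only [List.map_cons, List.prod_cons, Pi.mul_apply, Set.mem_Icc] at *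
        constructor
        · exact mul_nonneg h1.1 h2.1
        · exact mul_le_one₀ h1.2 h2.1 h2.2
  refine ⟨F, Set.countable_range _, hcont, ?_, ?_⟩
  · rintro f ⟨l1, rfl⟩ f' ⟨l2, rfl⟩
    exact ⟨l1 ++ l2, by simp⟩
  · intro x x₀
    constructor
    · intro hx f hf
      exact ((hcont f hf).1.tendsto x₀).comp hx
    · intro h
      rw [Metric.tendsto_nhds]
      intro ε hε
      obtain ⟨k, hk⟩ := exists_nat_gt (2/ε)
      set c : ℝ := (k:ℝ) + 1 with hc
      have hcpos : 0 < c := by positivity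
      have hc2 : 2/ε < c := lt_of_lt_of_le hk (by simp [hc])
      have hcε : 1/c < ε/2 := by
        rw [div_lt_iff₀ hcpos] at *
        rw [div_lt_iff₀ hε] at hc2
        nlinarith
      obtain ⟨d, hd1, hd2⟩ := Metric.dense_iff.mp Ddense x₀ (1/(2*c)) (by positivity)
      have hfF : g d k ∈ F := by
        refine ⟨[(⟨d, hd2⟩, k)], ?_⟩
        simp
      have hfx₀ : 0 < g d k x₀ := by
        have hdd : dist x₀ d < 1/(2*c) := by
          rw [Metric.mem_ball] at hd1
          rw [dist_comm]; exact hd1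
        have : c * dist x₀ d < 1/2 := by
          calc c * dist x₀ d < c * (1/(2*c)) :=
            (mul_lt_mul_iff_right₀ hcpos).mpr hdd
          _ = 1/2 := by field_simp
        exact lt_max_of_lt_right (by linarith)
      filter_upwards [(h _ hfF).eventually (eventually_gt_nhds hfx₀)] with n hn
      have hpos : 0 < 1 - c * dist (x n) d := by
        rcases lt_max_iff.mp hn with h0 | h0
        · linarith
        · exact h0
      have hdn : dist (x n) d < 1/c := by
        rw [lt_div_iff₀ hcpos, mul_comm]
        linarith
      have hdd : dist x₀ d < 1/(2*c) := by
        rw [Metric.mem_ball] at hd1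
        rw [dist_comm]; exact hd1
      calc dist (x n) x₀ ≤ dist (x n) d + dist d x₀ := dist_triangle _ _ _
        _ = dist (x n) d + dist x₀ d := by rw [dist_comm d x₀]
        _ < 1/c + 1/(2*c) := add_lt_add hdn hdd
        _ < ε := by
            have : 1/(2*c) < 1/c := by
              rw [div_lt_div_iff₀ (by positivity) hcpos]
              nlinarith
            linarith
end

section
/- Let S be a Lusin space, let λ := ½(Leb + δ_1) on [0,1], let μ be a Borel probability measure on [0,1] × S whose first marginal is λ, and let {φ_n : n ∈ ℕ} be a point-separating family of Borel functions φ_n : S → [0,1]. Then μ is an S-valued pseudo-path if and only if for every n ∈ ℕ the pushforward of μ under the map (t, s) ↦ (t, φ_n(s)), a Borel probability measure on [0,1] × [0,1], is a [0,1]-valued pseudo-path. -/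
open MeasureTheory
open scoped ENNReal NNReal

/-- The measure `λ = ½(Leb + δ₁)` on the unit interval `[0,1]`. -/
noncomputable def lambdaMZ : Measure unitInterval :=
  (1 / 2 : ℝ≥0∞) • ((volume : Measure ℝ).comap Subtype.val)
    + (1 / 2 : ℝ≥0∞) • Measure.dirac 1

/-- An `E`-valued pseudo-path: a measure on `[0,1] × E` of the form `(id, g)_# λ` for some
Borel function `g : [0,1] → E`. -/
def IsPseudoPath {E : Type*} [MeasurableSpace E] (μ : Measure (unitInterval × E)) : Prop :=
  ∃ g : unitInterval → E, Measurable g ∧ μ = Measure.map (fun t => (t, g t)) lambdaMZ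

/-- Auxiliary: an injective Borel map from a Polish space into a countably separated
measurable space is a measurable embedding (stated with the Borel σ-algebra explicitly). -/
lemma aux_measurableEmbedding_polish {S : Type*} (t' : TopologicalSpace S)
    (hp : @PolishSpace S t')
    {T : Type*} [MeasurableSpace T] [MeasurableSpace.CountablySeparated T]
    (Φ : S → T) (hmeas : @Measurable S T (@borel S t') _ Φ) (hinj : Function.Injective Φ) :
    @MeasurableEmbedding S T (@borel S t') _ Φ := by
  letI := t'
  letI := borel S
  haveI : BorelSpace S := ⟨rfl⟩
  exact hmeas.measurableEmbedding hinj

/-- Auxiliary: an injective Borel map from a Lusin metrizable space into a countably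
separated measurable space is a measurable embedding. -/
lemma aux_measurableEmbedding_lusin {S : Type*} {ts : TopologicalSpace S}
    {m : MeasurableSpace S} (hb : @BorelSpace S ts m)
    (t' : TopologicalSpace S) (hle : t' ≤ ts) (hp : @PolishSpace S t')
    {T : Type*} [MeasurableSpace T] [MeasurableSpace.CountablySeparated T]
    (Φ : S → T) (hmeas : @Measurable S T m _ Φ) (hinj : Function.Injective Φ) :
    @MeasurableEmbedding S T m _ Φ := by
  have hm : m ≤ @borel S t' := by
    rw [hb.measurable_eq]
    exact @borel_anti S t' ts hle
  have emb' : @MeasurableEmbedding S T (@borel S t') _ Φ :=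
    aux_measurableEmbedding_polish t' hp Φ (hmeas.mono hm le_rfl) hinj
  refine ⟨hinj, hmeas, fun s hs => ?_⟩
  have hs' : MeasurableSet[@borel S t'] s := hm s hs
  exact @MeasurableEmbedding.measurableSet_image' S T (@borel S t') _ Φ emb' s hs'

/-- Let `S` be a Lusin space, `μ` a Borel probability measure on `[0,1] × S`
with first marginal `λ = ½(Leb + δ₁)`, and `(φ n)` a point-separating family of Borel functions
`S → [0,1]`. Then `μ` is an `S`-valued pseudo-path iff for every `n` the pushforward of `μ`
under `(t, s) ↦ (t, φ n s)` is a `[0,1]`-valued pseudo-path. -/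
theorem statement8 {S : Type*} [ts : TopologicalSpace S] [TopologicalSpace.MetrizableSpace S]
    [MeasurableSpace S] [BorelSpace S]
    (hLusin : ∃ t' : TopologicalSpace S, t' ≤ ts ∧ @PolishSpace S t')
    (μ : Measure (unitInterval × S)) [IsProbabilityMeasure μ]
    (hmarg : μ.map Prod.fst = lambdaMZ)
    (φ : ℕ → S → unitInterval) (hφ : ∀ n, Measurable (φ n))
    (hsep : ∀ x y : S, x = y ↔ ∀ n, φ n x = φ n y) :
    IsPseudoPath μ ↔
      ∀ n, IsPseudoPath (μ.map (fun p : unitInterval × S => (p.1, φ n p.2))) := by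
  constructor
  · rintro ⟨g, hg, hμ⟩ n
    refine ⟨fun t => φ n (g t), (hφ n).comp hg, ?_⟩
    have h1 : Measurable (fun p : unitInterval × S => (p.1, φ n p.2)) :=
      measurable_fst.prodMk ((hφ n).comp measurable_snd)
    have h2 : Measurable (fun t : unitInterval => (t, g t)) :=
      measurable_id.prodMk hg
    rw [hμ, Measure.map_map h1 h2]
    rfl
  · intro h
    classical
    -- `S` is nonempty
    have hSne : Nonempty S := by
      by_contra hc
      rw [not_nonempty_iff] at hc
      have h1 : μ Set.univ = 1 := measure_univ
      rw [Set.univ_eq_empty_iff.mpr (by infer_instance), measure_empty] at h1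
      exact zero_ne_one h1
    choose g hg hgμ using h
    set G : unitInterval → (ℕ → unitInterval) := fun t n => g n t with hG
    have hGmeas : Measurable G := measurable_pi_lambda _ fun n => hg n
    set Φ : S → (ℕ → unitInterval) := fun s n => φ n s with hΦ
    have hΦmeas : Measurable Φ := measurable_pi_lambda _ fun n => hφ n
    have hinj : Function.Injective Φ := fun x y hxy => (hsep x y).2 fun n => congrFun hxy n
    have emb : MeasurableEmbedding Φ := by
      have hb : BorelSpace S := inferInstance
      obtain ⟨t', hle, hpolish⟩ := hLusin
      exact aux_measurableEmbedding_lusin hb t' hle hpolish Φ hΦmeas hinj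
    have hrange : MeasurableSet (Set.range Φ) := emb.measurableSet_range
    -- a.e. identification of the second coordinate
    have hmn : ∀ n, ∀ᵐ p ∂μ, φ n p.2 = g n p.1 := by
      intro n
      have hfm : Measurable (fun p : unitInterval × S => (p.1, φ n p.2)) :=
        measurable_fst.prodMk ((hφ n).comp measurable_snd)
      have hgn : Measurable (fun t : unitInterval => (t, g n t)) :=
        measurable_id.prodMk (hg n)
      have hset : MeasurableSet {q : unitInterval × unitInterval | q.2 = g n q.1} := by
        have hmp : Measurable fun q : unitInterval × unitInterval => (q.2, g n q.1) :=
          measurable_snd.prodMk ((hg n).comp measurable_fst)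
        exact hmp isClosed_diagonal.measurableSet
      have h0 : (Measure.map (fun t => (t, g n t)) lambdaMZ)
          {q : unitInterval × unitInterval | q.2 = g n q.1}ᶜ = 0 := by
        rw [Measure.map_apply hgn hset.compl]
        convert measure_empty (μ := lambdaMZ)
        ext t
        simp
      have h1 : μ ((fun p : unitInterval × S => (p.1, φ n p.2)) ⁻¹'
          {q : unitInterval × unitInterval | q.2 = g n q.1}ᶜ) = 0 := by
        rw [← Measure.map_apply hfm hset.compl, hgμ n, h0]
      rw [ae_iff]
      exact h1
    have hae : ∀ᵐ p ∂μ, Φ p.2 = G p.1 := by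
      filter_upwards [ae_all_iff.2 hmn] with p hp
      exact funext fun n => hp n
    -- build the graph function
    set G' : unitInterval → (ℕ → unitInterval) :=
      fun t => if G t ∈ Set.range Φ then G t else Φ (Classical.arbitrary S) with hG'
    have hG'meas : Measurable G' :=
      Measurable.ite (hGmeas hrange) hGmeas measurable_const
    have hG'range : ∀ t, G' t ∈ Set.range Φ := by
      intro t
      show (if G t ∈ Set.range Φ then G t else Φ (Classical.arbitrary S)) ∈ Set.range Φ
      by_cases ht : G t ∈ Set.range Φ
      · rw [if_pos ht]; exact ht
      · rw [if_neg ht]; exact ⟨Classical.arbitrary S, rfl⟩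
    set g₀ : unitInterval → S := fun t => Function.invFun Φ (G' t) with hg₀def
    have hΦg₀ : ∀ t, Φ (g₀ t) = G' t := fun t => Function.invFun_eq (hG'range t)
    have hg₀ : Measurable g₀ := by
      intro A hA
      have himg : MeasurableSet (Φ '' A) := emb.measurableSet_image' hA
      have hpre : g₀ ⁻¹' A = G' ⁻¹' (Φ '' A) := by
        ext t
        constructor
        · intro hAt
          exact ⟨g₀ t, hAt, hΦg₀ t⟩
        · rintro ⟨a, ha, haeq⟩
          have : g₀ t = a := by
            show Function.invFun Φ (G' t) = a
            rw [← haeq]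
            exact Function.leftInverse_invFun hinj a
          show g₀ t ∈ A
          rw [this]
          exact ha
      rw [hpre]
      exact hG'meas himg
    have haeg : ∀ᵐ p ∂μ, p.2 = g₀ p.1 := by
      filter_upwards [hae] with p hp
      have hmem : G p.1 ∈ Set.range Φ := ⟨p.2, hp⟩
      have hG'eq : G' p.1 = Φ p.2 := by
        show (if G p.1 ∈ Set.range Φ then G p.1 else Φ (Classical.arbitrary S)) = Φ p.2
        rw [if_pos hmem]
        exact hp.symm
      show p.2 = Function.invFun Φ (G' p.1)
      rw [hG'eq, Function.leftInverse_invFun hinj]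
    refine ⟨g₀, hg₀, ?_⟩
    have hid : μ = μ.map (fun p : unitInterval × S => (p.1, g₀ p.1)) := by
      conv_lhs => rw [← Measure.map_id (μ := μ)]
      refine Measure.map_congr ?_
      filter_upwards [haeg] with p hp
      simp only [id]
      exact Prod.ext rfl hp
    have h2 : Measurable (fun t : unitInterval => (t, g₀ t)) :=
      measurable_id.prodMk hg₀
    rw [hid, ← hmarg, Measure.map_map h2 measurable_fst]
    rfl
end

section
/- Let S be a Lusin space with a compatible metric d, let λ := ½(Leb + δ_1) on [0,1], let {φ_n : n ∈ ℕ} be a countable convergence determining family of functions φ_n : S → [0,1], and let f_k, f : [0,1] → S be Borel functions (k ∈ ℕ). Then f_k → f in λ-measure if and only if for every n ∈ ℕ the functions φ_n ∘ f_k converge to φ_n ∘ f in λ-measure. -/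
open MeasureTheory Filter
open scoped ENNReal NNReal Topology

lemma lambdaMZ_finite : IsFiniteMeasure lambdaMZ := by
  constructor
  have hemb : MeasurableEmbedding ((↑) : unitInterval → ℝ) :=
    MeasurableEmbedding.subtype_coe measurableSet_Icc
  rw [lambdaMZ]
  rw [Measure.add_apply, Measure.smul_apply, Measure.smul_apply,
    hemb.comap_apply, Set.image_univ, Subtype.range_coe, Real.volume_Icc,
    Measure.dirac_apply' _ MeasurableSet.univ]
  simp only [smul_eq_mul, Set.indicator_univ, Pi.one_apply, sub_zero, ENNReal.ofReal_one]
  norm_num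

lemma sep_of_polish_le {S : Type*} {tS : TopologicalSpace S}
    (h : ∃ t' : TopologicalSpace S, t' ≤ tS ∧ @PolishSpace S t') :
    @TopologicalSpace.SeparableSpace S tS := by
  obtain ⟨t', ht'le, ht'pol⟩ := h
  have hSC' : @SecondCountableTopology S t' := ht'pol.toSecondCountableTopology
  obtain ⟨D, hDc, hDd⟩ := @TopologicalSpace.exists_countable_dense S t'
    (@TopologicalSpace.SecondCountableTopology.to_separableSpace S t' hSC')
  have hDdense : @Dense S tS D := fun x => @closure.mono S t' tS D ht'le x (hDd x)
  exact @TopologicalSpace.SeparableSpace.mk S tS ⟨D, hDc, hDdense⟩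

/-- Let `S` be a Lusin space with a compatible metric, `(φ n)` a countable
convergence determining family of `[0,1]`-valued functions on `S`, and `f_k, f : [0,1] → S`
Borel. Then `f_k → f` in `λ`-measure iff `φ n ∘ f_k → φ n ∘ f` in `λ`-measure for all `n`. -/
theorem statement9 {S : Type*} [MetricSpace S] [MeasurableSpace S] [BorelSpace S]
    (hLusin : TopologicalSpace.MetrizableSpace S ∧
      ∃ t' : TopologicalSpace S, t' ≤ (inferInstance : TopologicalSpace S) ∧ @PolishSpace S t')
    (φ : ℕ → S → ℝ) (hφ01 : ∀ n x, φ n x ∈ Set.Icc (0 : ℝ) 1)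
    (hconvdet : ∀ (x : ℕ → S) (x₀ : S),
      Tendsto x atTop (nhds x₀) ↔
        ∀ n, Tendsto (fun m => φ n (x m)) atTop (nhds (φ n x₀)))
    (fk : ℕ → unitInterval → S) (f : unitInterval → S)
    (hfk : ∀ k, Measurable (fk k)) (hf : Measurable f) :
    TendstoInMeasure lambdaMZ fk atTop f ↔
      ∀ n, TendstoInMeasure lambdaMZ (fun k t => φ n (fk k t)) atTop (fun t => φ n (f t)) := by
  haveI : IsFiniteMeasure lambdaMZ := lambdaMZ_finite
  -- each `φ n` is continuous
  have hφc : ∀ n, Continuous (φ n) := by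
    intro n
    refine continuous_iff_seqContinuous.mpr ?_
    intro x x₀ hx
    exact (hconvdet x x₀).mp hx n
  -- the map `Φ : S → ℝ^ℕ` is inducing, hence `S` is second countable
  set Φ : S → (ℕ → ℝ) := fun x n => φ n x with hΦ
  have hΦc : Continuous Φ := continuous_pi fun n => hφc n
  have hind : Topology.IsInducing Φ := by
    rw [Topology.isInducing_iff_nhds]
    intro x
    refine le_antisymm ((hΦc.tendsto x).le_comap) ?_
    by_contra hcon
    rw [Filter.le_def] at hcon
    push_neg at hcon
    obtain ⟨U, hU, hUnot⟩ := hcon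
    obtain ⟨V, hV⟩ := (Filter.comap Φ (nhds (Φ x))).exists_antitone_basis
    have hnot : ∀ m : ℕ, ∃ y, y ∈ V m ∧ y ∉ U := by
      intro m
      by_contra hcc
      push_neg at hcc
      exact hUnot (Filter.mem_of_superset (hV.mem m) fun y hy => hcc y hy)
    choose xs hxsV hxsU using hnot
    have hxs_tendsto : Tendsto xs atTop (Filter.comap Φ (nhds (Φ x))) :=
      hV.tendsto hxsV
    have hxs_Φ : Tendsto (fun m => Φ (xs m)) atTop (nhds (Φ x)) :=
      Filter.tendsto_comap_iff.mp hxs_tendsto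
    have hxs_x : Tendsto xs atTop (nhds x) := by
      refine (hconvdet xs x).mpr fun n => ?_
      exact (tendsto_pi_nhds.mp hxs_Φ) n
    have hev : ∀ᶠ m in atTop, xs m ∈ U := hxs_x hU
    obtain ⟨m, hm⟩ := hev.exists
    exact hxsU m hm
  haveI : SecondCountableTopology S := hind.secondCountableTopology
  constructor
  · -- forward direction
    intro h n ε hε
    refine tendsto_of_subseq_tendsto fun ns hns => ?_
    have h' : TendstoInMeasure lambdaMZ (fun i => fk (ns i)) atTop f :=
      fun δ hδ => (h δ hδ).comp hns
    obtain ⟨ms, -, hae⟩ := h'.exists_seq_tendsto_ae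
    have hae' : ∀ᵐ x ∂lambdaMZ,
        Tendsto (fun i => φ n (fk (ns (ms i)) x)) atTop (𝓝 (φ n (f x))) := by
      filter_upwards [hae] with x hx
      exact (hconvdet (fun i => fk (ns (ms i)) x) (f x)).mp hx n
    have := tendstoInMeasure_of_tendsto_ae
      (f := fun i x => φ n (fk (ns (ms i)) x)) (g := fun x => φ n (f x))
      (fun i => ((hφc n).measurable.comp (hfk (ns (ms i)))).aestronglyMeasurable) hae'
    exact ⟨ms, this ε hε⟩
  · -- reverse direction
    intro h ε hε
    refine tendsto_of_subseq_tendsto fun ns hns => ?_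
    -- for each j, eventually all the relevant measures are small
    have hP : ∀ j : ℕ, ∀ᶠ k in atTop, ∀ n ∈ Finset.range (j + 1),
        lambdaMZ {x | (2⁻¹ : ℝ) ^ j ≤ dist (φ n (fk k x)) (φ n (f x))}
          ≤ (2⁻¹ : ℝ≥0∞) ^ j * (2⁻¹ : ℝ≥0∞) ^ j := by
      intro j
      rw [Filter.eventually_all_finset]
      intro n _
      have h1 : ((2⁻¹ : ℝ≥0∞) ^ j) ≠ 0 := (ENNReal.pow_pos (by norm_num) j).ne'
      have hpos : (0 : ℝ≥0∞) < (2⁻¹ : ℝ≥0∞) ^ j * (2⁻¹ : ℝ≥0∞) ^ j :=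
        ENNReal.mul_pos h1 h1
      exact (tendstoInMeasure_iff_dist.mp (h n) ((2⁻¹ : ℝ) ^ j) (by positivity)).eventually_le_const hpos
    have hex : ∀ j : ℕ, ∃ i, ∀ n ∈ Finset.range (j + 1),
        lambdaMZ {x | (2⁻¹ : ℝ) ^ j ≤ dist (φ n (fk (ns i) x)) (φ n (f x))}
          ≤ (2⁻¹ : ℝ≥0∞) ^ j * (2⁻¹ : ℝ≥0∞) ^ j :=
      fun j => (hns.eventually (hP j)).exists
    choose ms hms using hex
    -- Borel–Cantelli
    set E : ℕ → Set unitInterval := fun j =>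
      ⋃ n ∈ Finset.range (j + 1),
        {x | (2⁻¹ : ℝ) ^ j ≤ dist (φ n (fk (ns (ms j)) x)) (φ n (f x))} with hE
    have hEmeas : ∀ j, lambdaMZ (E j) ≤ (2⁻¹ : ℝ≥0∞) ^ j := by
      intro j
      calc lambdaMZ (E j)
          ≤ ∑ n ∈ Finset.range (j + 1),
              lambdaMZ {x | (2⁻¹ : ℝ) ^ j ≤ dist (φ n (fk (ns (ms j)) x)) (φ n (f x))} :=
            measure_biUnion_finset_le _ _
        _ ≤ ∑ _n ∈ Finset.range (j + 1), (2⁻¹ : ℝ≥0∞) ^ j * (2⁻¹ : ℝ≥0∞) ^ j :=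
            Finset.sum_le_sum (hms j)
        _ = (j + 1 : ℕ) * ((2⁻¹ : ℝ≥0∞) ^ j * (2⁻¹ : ℝ≥0∞) ^ j) := by
            simp [Finset.sum_const, nsmul_eq_mul]
        _ ≤ (2 : ℝ≥0∞) ^ j * ((2⁻¹ : ℝ≥0∞) ^ j * (2⁻¹ : ℝ≥0∞) ^ j) := by
            gcongr
            calc ((j + 1 : ℕ) : ℝ≥0∞) ≤ ((2 ^ j : ℕ) : ℝ≥0∞) := by
                  exact_mod_cast Nat.succ_le_of_lt (Nat.lt_two_pow_self (n := j))
              _ = (2 : ℝ≥0∞) ^ j := by push_cast; ring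
        _ = ((2 : ℝ≥0∞) * 2⁻¹) ^ j * (2⁻¹ : ℝ≥0∞) ^ j := by ring
        _ = (2⁻¹ : ℝ≥0∞) ^ j := by
            rw [ENNReal.mul_inv_cancel (by norm_num) (by norm_num)]
            simp
    have hsum : (∑' j, lambdaMZ (E j)) ≠ ∞ := by
      refine ne_top_of_le_ne_top ?_ (ENNReal.tsum_le_tsum hEmeas)
      rw [ENNReal.tsum_geometric]
      simp
    have hBC := MeasureTheory.ae_eventually_notMem hsum
    -- a.e. convergence along the chosen subsequence
    have hae : ∀ᵐ x ∂lambdaMZ,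
        Tendsto (fun j => fk (ns (ms j)) x) atTop (𝓝 (f x)) := by
      filter_upwards [hBC] with x hx
      refine (hconvdet (fun j => fk (ns (ms j)) x) (f x)).mpr ?_
      intro n
      refine tendsto_iff_dist_tendsto_zero.mpr ?_
      refine squeeze_zero' (Eventually.of_forall fun _ => dist_nonneg) ?_
        (tendsto_pow_atTop_nhds_zero_of_lt_one (by norm_num) (by norm_num : (2⁻¹ : ℝ) < 1))
      filter_upwards [hx, eventually_ge_atTop n] with j hj hjn
      by_contra hcon
      push_neg at hcon
      exact hj (Set.mem_biUnion (Finset.mem_range.mpr (Nat.lt_succ_of_le hjn)) hcon.le)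
    have := tendstoInMeasure_of_tendsto_ae
      (f := fun j => fk (ns (ms j))) (g := f)
      (fun j => (hfk (ns (ms j))).aestronglyMeasurable) hae
    exact ⟨ms, this ε hε⟩
end

section
/- Let S be a Lusin space, let X and Y be S-valued random variables on a probability space (Ω, F, P), let G ⊆ F be a sub-σ-algebra, and let κ : Ω → P(S) be a regular conditional distribution of X given G. If κ(ω) = δ_{Y(ω)} for P-almost every ω ∈ Ω, then X = Y P-almost surely. -/
open MeasureTheory
open scoped ENNReal NNReal

/-- `κ : Ω → P(S)` is a regular conditional distribution of `X : Ω → S` given the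
sub-σ-algebra `G`: `ω ↦ κ ω A` is `G`-measurable for every Borel `A`, and
`∫_B κ ω A dP(ω) = P(B ∩ {X ∈ A})` for every `B ∈ G` and Borel `A`. -/
def IsRegCondDistrib (Ω S : Type*) [MeasurableSpace Ω] [MeasurableSpace S]
    (P : Measure Ω) (X : Ω → S) (G : MeasurableSpace Ω)
    (κ : Ω → ProbabilityMeasure S) : Prop :=
  (∀ A : Set S, MeasurableSet A → Measurable[G] fun ω => κ ω A) ∧
  (∀ B : Set Ω, MeasurableSet[G] B → ∀ A : Set S, MeasurableSet A →
    ∫⁻ ω in B, (κ ω A : ℝ≥0∞) ∂P = P (B ∩ X ⁻¹' A))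

lemma aux_borel_le {S : Type*} (ts t' : TopologicalSpace S) (m : MeasurableSpace S)
    (hb : @BorelSpace S ts m) (ht2 : @T2Space S ts) (hle : t' ≤ ts) (hpol : @PolishSpace S t') :
    @borel S t' ≤ m := by
  intro s hs
  have e : @MeasurableEmbedding S S (@borel S t') m id :=
    @Continuous.measurableEmbedding S S m ts ht2 id hb t' hpol (@borel S t')
      (@BorelSpace.mk S t' (@borel S t') rfl)
      (continuous_id_of_le hle) Function.injective_id
  have := e.measurableSet_image.2 hs
  simpa using this

/-- Let `S` be a Lusin space, `X, Y` `S`-valued random variables on `(Ω, F, P)`,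
`G ⊆ F` a sub-σ-algebra and `κ` a regular conditional distribution of `X` given `G`. If
`κ ω = δ_{Y ω}` for `P`-almost every `ω`, then `X = Y` `P`-almost surely. -/
theorem statement15 {S : Type*} [ts : TopologicalSpace S]
    [TopologicalSpace.MetrizableSpace S] [MeasurableSpace S] [BorelSpace S]
    (hLusin : ∃ t' : TopologicalSpace S, t' ≤ ts ∧ @PolishSpace S t')
    {Ω : Type*} [mΩ : MeasurableSpace Ω] (P : Measure Ω) [IsProbabilityMeasure P]
    (X Y : Ω → S) (hX : Measurable X) (hY : Measurable Y)
    (G : MeasurableSpace Ω) (hG : G ≤ mΩ)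
    (κ : Ω → ProbabilityMeasure S)
    (hκ : @IsRegCondDistrib Ω S mΩ _ P X G κ)
    (hdirac : ∀ᵐ ω ∂P, (κ ω : Measure S) = Measure.dirac (Y ω)) :
    X =ᵐ[P] Y := by
  obtain ⟨hκ1, hκ2⟩ := hκ
  obtain ⟨t', ht'le, ht'pol⟩ := hLusin
  -- S is a standard Borel space
  have hm : ‹MeasurableSpace S› = @borel S t' := by
    refine le_antisymm ?_ (aux_borel_le ts t' _ ‹_› inferInstance ht'le ht'pol)
    exact (@BorelSpace.measurable_eq S ts _ ‹_›).trans_le (borel_anti ht'le)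
  haveI : StandardBorelSpace S := ⟨⟨t', ⟨hm⟩, ht'pol⟩⟩
  obtain ⟨f, hf⟩ := exists_measurableEmbedding_real S
  -- key step: for every Borel A, a.e. (Y ∈ A → X ∈ A)
  have key : ∀ A : Set S, MeasurableSet A → ∀ᵐ ω ∂P, Y ω ∈ A → X ω ∈ A := by
    intro A hA
    set B : Set Ω := (fun ω => κ ω A) ⁻¹' {1} with hBdef
    have hBG : MeasurableSet[G] B := hκ1 A hA (measurableSet_singleton 1)
    have hBm : MeasurableSet[mΩ] B := hG _ hBG
    have hint : ∫⁻ ω in B, (κ ω A : ℝ≥0∞) ∂P = P B := by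
      rw [setLIntegral_congr_fun (μ := P) (f := fun ω => (κ ω A : ℝ≥0∞)) (g := fun _ => 1)
        hBm (fun ω hω => ?_), setLIntegral_one]
      simp only [hBdef, Set.mem_preimage, Set.mem_singleton_iff] at hω
      simp [hω]
    have heq : P B = P (B ∩ X ⁻¹' A) := by rw [← hκ2 B hBG A hA, hint]
    have hdiff : P (B \ X ⁻¹' A) = 0 := by
      have h1 := measure_inter_add_diff (μ := P) B (hX hA)
      rw [← heq] at h1
      exact (ENNReal.add_right_inj (measure_ne_top P B)).mp (h1.trans (add_zero (P B)).symm)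
    have hnull : ∀ᵐ ω ∂P, ω ∉ B \ X ⁻¹' A := measure_eq_zero_iff_ae_notMem.mp hdiff
    filter_upwards [hdirac, hnull] with ω hω1 hω2 hYA
    have hωB : ω ∈ B := by
      simp only [hBdef, Set.mem_preimage, Set.mem_singleton_iff]
      have h1 : (κ ω : Measure S) A = 1 := by
        simp [hω1, Measure.dirac_apply' _ hA, Set.indicator_of_mem hYA]
      rw [← ENNReal.coe_eq_one, ProbabilityMeasure.ennreal_coeFn_eq_coeFn_toMeasure]
      exact h1
    by_contra hXA
    exact hω2 ⟨hωB, hXA⟩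
  -- hence a.e. (X ∈ A ↔ Y ∈ A)
  have key2 : ∀ A : Set S, MeasurableSet A → ∀ᵐ ω ∂P, (X ω ∈ A ↔ Y ω ∈ A) := by
    intro A hA
    filter_upwards [key A hA, key Aᶜ hA.compl] with ω h1 h2
    exact ⟨fun hx => by by_contra hy; exact h2 hy hx, h1⟩
  have hq : ∀ᵐ ω ∂P, ∀ q : ℚ, (f (X ω) < q ↔ f (Y ω) < q) := by
    rw [ae_all_iff]
    intro q
    filter_upwards [key2 (f ⁻¹' Set.Iio (q : ℝ)) (hf.measurable measurableSet_Iio)] with ω h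
    simpa using h
  filter_upwards [hq] with ω h
  refine hf.injective (le_antisymm ?_ ?_)
  · by_contra hlt
    obtain ⟨q, hq1, hq2⟩ := exists_rat_btwn (not_le.mp hlt)
    exact absurd ((h q).2 hq1) (not_lt.mpr hq2.le)
  · by_contra hlt
    obtain ⟨q, hq1, hq2⟩ := exists_rat_btwn (not_le.mp hlt)
    exact absurd ((h q).1 hq1) (not_lt.mpr hq2.le)
end

section
/- Let S be a separable metric space and let f : [0,1] → S be a function such that for every t ∈ [0,1) the right limit lim_{s ↓ t} f(s) exists in S. Then the set of points of [0,1] at which f is discontinuous is at most countable. -/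
open Filter

private lemma statement18_aux {S : Type*} [MetricSpace S]
    (f : unitInterval → S)
    (hright : ∀ t : unitInterval, t < 1 →
      ∃ y : S, Tendsto f (nhdsWithin t (Set.Ioi t)) (nhds y))
    (ε : ℝ) (hε : 0 < ε) :
    Set.Countable {t : unitInterval |
      ∀ δ > (0:ℝ), ∃ s : unitInterval, dist s t < δ ∧ ε ≤ dist (f s) (f t)} := by
  set D : Set unitInterval := {t : unitInterval |
      ∀ δ > (0:ℝ), ∃ s : unitInterval, dist s t < δ ∧ ε ≤ dist (f s) (f t)} with hD
  have hsub : D ⊆ insert 1 (D \ {1}) := by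
    intro t ht
    by_cases h : t = (1 : unitInterval)
    · exact h ▸ Set.mem_insert _ _
    · exact Set.mem_insert_of_mem _ ⟨ht, h⟩
  refine Set.Countable.mono hsub (Set.Countable.insert _ ?_)
  -- For each t in D \ {1}, pick a rational q with t < q and no point of D in (t, q)
  have key : ∀ t ∈ D \ {1}, ∃ q : ℚ, (t : ℝ) < q ∧
      ∀ u ∈ D, t < u → (u : ℝ) < q → False := by
    rintro t ⟨htD, ht1⟩
    have htlt : t < 1 := lt_of_le_of_ne unitInterval.le_one' ht1
    obtain ⟨y, hy⟩ := hright t htlt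
    rw [Metric.tendsto_nhdsWithin_nhds] at hy
    obtain ⟨δ, hδ, Hδ⟩ := hy (ε / 3) (by positivity)
    obtain ⟨q, hq1, hq2⟩ := exists_rat_btwn (show (t : ℝ) < t + δ by linarith)
    refine ⟨q, hq1, ?_⟩
    intro u huD htu huq
    have hut : (t : ℝ) < u := Subtype.coe_lt_coe.mpr htu
    have huδ : (u : ℝ) < t + δ := lt_trans huq hq2
    set δ' : ℝ := min ((u : ℝ) - t) ((t : ℝ) + δ - u) with hδ'
    have hδ'pos : 0 < δ' := lt_min (by linarith) (by linarith)
    obtain ⟨s, hs1, hs2⟩ := huD δ' hδ'pos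
    rw [Subtype.dist_eq, Real.dist_eq, abs_lt] at hs1
    have hs1a : (s : ℝ) - u < δ' := hs1.2
    have hs1b : -δ' < (s : ℝ) - u := hs1.1
    have hδ'1 : δ' ≤ (u : ℝ) - t := min_le_left _ _
    have hδ'2 : δ' ≤ (t : ℝ) + δ - u := min_le_right _ _
    have hst : (t : ℝ) < s := by linarith
    have hstδ : (s : ℝ) - t < δ := by linarith
    have hsIoi : s ∈ Set.Ioi t := Subtype.coe_lt_coe.mp hst
    have huIoi : u ∈ Set.Ioi t := htu
    have hds : dist s t < δ := by
      rw [Subtype.dist_eq, Real.dist_eq, abs_lt]; constructor <;> linarith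
    have hdu : dist u t < δ := by
      rw [Subtype.dist_eq, Real.dist_eq, abs_lt]; constructor <;> linarith
    have h1 := Hδ hsIoi hds
    have h2 := Hδ huIoi hdu
    have : dist (f s) (f u) < ε := by
      calc dist (f s) (f u) ≤ dist (f s) y + dist (f u) y := dist_triangle_right _ _ _
        _ < ε / 3 + ε / 3 := add_lt_add h1 h2
        _ < ε := by linarith
    linarith
  classical
  choose! q hq1 hq2 using key
  apply Set.countable_of_injective_of_countable_image (f := q)
  · intro a ha b hb hab
    by_contra hne
    rcases lt_or_gt_of_ne hne with h | h
    · exact hq2 a ha b hb.1 h (hab ▸ hq1 b hb)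
    · exact hq2 b hb a ha.1 h (hab.symm ▸ hq1 a ha)
  · exact Set.to_countable _

/-- Let `S` be a separable metric space and `f : [0,1] → S` a function such
that at every `t ∈ [0,1)` the right limit `lim_{s ↓ t} f(s)` exists. Then the set of points of
`[0,1]` at which `f` is discontinuous is at most countable. -/
theorem statement18 {S : Type*} [MetricSpace S] [TopologicalSpace.SeparableSpace S]
    (f : unitInterval → S)
    (hright : ∀ t : unitInterval, t < 1 →
      ∃ y : S, Tendsto f (nhdsWithin t (Set.Ioi t)) (nhds y)) :
    Set.Countable {t : unitInterval | ¬ ContinuousAt f t} := by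
  have hsub : {t : unitInterval | ¬ ContinuousAt f t} ⊆
      ⋃ n : ℕ, {t : unitInterval |
        ∀ δ > (0:ℝ), ∃ s : unitInterval,
          dist s t < δ ∧ (1 : ℝ) / (n + 1) ≤ dist (f s) (f t)} := by
    intro t ht
    simp only [Set.mem_setOf_eq, Metric.continuousAt_iff] at ht
    push_neg at ht
    obtain ⟨ε, hε, hεprop⟩ := ht
    obtain ⟨n, hn⟩ := exists_nat_one_div_lt hε
    refine Set.mem_iUnion.mpr ⟨n, ?_⟩
    intro δ hδ
    obtain ⟨s, hs1, hs2⟩ := hεprop δ hδ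
    exact ⟨s, hs1, le_trans hn.le hs2⟩
  refine Set.Countable.mono hsub (Set.countable_iUnion fun n => ?_)
  exact statement18_aux f hright _ (by positivity)
end

section
/- Let S_1 be a separable metrizable topological space and S_2 a Polish space. If there exists a continuous map f : S_1 → S_2 such that f⁻¹(K) is compact in S_1 for every compact K ⊆ S_2, then S_1 is a Polish space. -/
set_option synthInstance.maxHeartbeats 1000000 in

/-- Let `S₁` be a separable metrizable space and `S₂` a Polish space. If there
is a continuous map `f : S₁ → S₂` such that preimages of compact sets are compact, then `S₁` is
Polish. -/
theorem statement19 {S₁ S₂ : Type*} [TopologicalSpace S₁]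
    [TopologicalSpace.MetrizableSpace S₁] [TopologicalSpace.SeparableSpace S₁]
    [TopologicalSpace S₂] [PolishSpace S₂]
    (h : ∃ f : S₁ → S₂, Continuous f ∧ ∀ K : Set S₂, IsCompact K → IsCompact (f ⁻¹' K)) :
    PolishSpace S₁ := by
  obtain ⟨f, hf, hK⟩ := h
  haveI : SecondCountableTopology S₁ := by
    letI := TopologicalSpace.metrizableSpaceMetric S₁
    exact UniformSpace.secondCountable_of_separable S₁
  haveI : T3Space S₁ := by
    letI := TopologicalSpace.metrizableSpaceMetric S₁
    infer_instance
  obtain ⟨e, he⟩ := TopologicalSpace.exists_embedding_l_infty S₁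
  letI := TopologicalSpace.upgradeIsCompletelyMetrizable S₂
  set g : S₁ → (BoundedContinuousFunction ℕ ℝ) × S₂ := fun x => (e x, f x) with hg
  have hgc : Continuous g := he.continuous.prodMk hf
  have hge : Topology.IsEmbedding g := by
    refine ⟨Topology.IsInducing.of_comp hgc continuous_fst ?_, fun a b hab => ?_⟩
    · exact he.toIsInducing
    · exact he.injective (congrArg Prod.fst hab)
  have hproper : IsProperMap g := by
    rw [isProperMap_iff_isCompact_preimage]
    refine ⟨hgc, fun L hL => ?_⟩
    have h1 : IsCompact (f ⁻¹' (Prod.snd '' L)) := hK _ (hL.image continuous_snd)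
    have h2 : g ⁻¹' L ⊆ f ⁻¹' (Prod.snd '' L) := fun x hx =>
      ⟨g x, hx, rfl⟩
    exact h1.of_isClosed_subset (hL.isClosed.preimage hgc) h2
  have hclosed : Topology.IsClosedEmbedding g :=
    ⟨hge, hproper.isClosedMap.isClosed_range⟩
  letI : MetricSpace S₁ := hge.comapMetricSpace g
  haveI : CompleteSpace S₁ := by
    rw [completeSpace_iff_isComplete_range hge.to_isometry.isUniformInducing]
    exact hclosed.isClosed_range.isComplete
  infer_instance
end
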